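/- Let G be a finite undirected simple graph possibly with loops (at most one edge between any two vertices, and a vertex may be joined to itself). Then there exists a subset S of the vertices such that for every vertex v, the number of vertices in S adjacent to v (counting v itself if v has a loop and v ∈ S) is odd if and only if v has a loop. -/

import Mathlib

private lemma zmod2_sq : ∀ a : ZMod 2, a * a = a := by decide

private lemma diag_mem_range {V : Type*} [Fintype V] [DecidableEq V]
    (M : Matrix V V (ZMod 2)) (hM : ∀ v w, M v w = M w v) :
    ∃ x : V → ZMod 2, M.mulVec x = fun v => M v v := by
  by_contra h
  push_neg at h
  have hx : (fun v => M v v) ∉ LinearMap.range M.mulVecLin := by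
    rintro ⟨x, hx⟩
    exact h x hx
  obtain ⟨f, hf0, hf⟩ := Submodule.exists_dual_map_eq_bot_of_notMem hx inferInstance
  set y : V → ZMod 2 := fun v => f (Pi.single v 1) with hy
  have hfy : ∀ z : V → ZMod 2, f z = ∑ v, z v * y v := by
    intro z
    have hs : ∀ v : V, (fun j => if v = j then (1 : ZMod 2) else 0) = Pi.single v 1 := by
      intro v; funext j; simp [Pi.single_apply, eq_comm]
    conv_lhs => rw [pi_eq_sum_univ z]
    rw [map_sum]
    refine Finset.sum_congr rfl fun v _ => ?_
    rw [map_smul, hs v]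
    simp [hy, smul_eq_mul]
  have hker : ∀ z : V → ZMod 2, f (M.mulVec z) = 0 := by
    intro z
    have hm : f (M.mulVec z) ∈ Submodule.map f (LinearMap.range M.mulVecLin) :=
      ⟨M.mulVec z, ⟨z, rfl⟩, rfl⟩
    rw [hf] at hm
    simpa using hm
  -- M y = 0
  have hMy : M.mulVec y = 0 := by
    funext w
    have this1 := hker (Pi.single w 1)
    rw [hfy] at this1
    simp only [Matrix.mulVec_single_one, Matrix.col_apply, mul_one] at this1
    have : M.mulVec y w = ∑ v, M v w * y v := by
      rw [Matrix.mulVec, dotProduct]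
      exact Finset.sum_congr rfl fun v _ => by rw [hM w v]
    rw [this, this1]
    rfl
  -- f (diag) = yᵀ M y = 0, contradiction
  have hdiag : f (fun v => M v v) = ∑ v, ∑ u, y v * M v u * y u := by
    rw [hfy]
    -- split double sum into diagonal and off-diagonal
    have hsplit : ∀ v : V, ∑ u, y v * M v u * y u
        = y v * M v v * y v + ∑ u ∈ Finset.univ.erase v, y v * M v u * y u :=
      fun v => (Finset.add_sum_erase _ _ (Finset.mem_univ v)).symm
    have hoff : ∑ v, ∑ u ∈ Finset.univ.erase v, y v * M v u * y u = 0 := by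
      rw [Finset.sum_sigma']
      refine Finset.sum_involution
        (fun p _ => ⟨p.2, p.1⟩) (fun p hp => ?_) (fun p hp _ => ?_)
        (fun p hp => ?_) (fun p hp => rfl)
      · have : y p.2 * M p.2 p.1 * y p.1 = y p.1 * M p.1 p.2 * y p.2 := by
          rw [hM p.2 p.1]; ring
        rw [this]
        exact CharTwo.add_self_eq_zero _
      · simp only [Finset.mem_sigma, Finset.mem_univ, Finset.mem_erase, true_and,
          and_true] at hp
        intro h
        exact hp (congrArg Sigma.fst h)
      · simp only [Finset.mem_sigma, Finset.mem_univ, Finset.mem_erase, true_and,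
          and_true] at hp ⊢
        exact hp.symm
    simp only [hsplit]
    rw [Finset.sum_add_distrib, hoff, add_zero]
    refine Finset.sum_congr rfl fun v _ => ?_
    rw [mul_comm (y v) (M v v), mul_assoc, zmod2_sq]
  have hzero : (∑ v, ∑ u, y v * M v u * y u) = 0 := by
    have : ∀ v, ∑ u, y v * M v u * y u = y v * M.mulVec y v := by
      intro v
      rw [Matrix.mulVec, dotProduct, Finset.mul_sum]
      exact Finset.sum_congr rfl fun u _ => by ring
    simp only [this, hMy]
    simp
  rw [hdiag, hzero] at hf0
  exact hf0 rfl

theorem finite_lights_out_with_loops {V : Type*} [Fintype V] [DecidableEq V]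
    (adj : V → V → Prop) [DecidableRel adj] (hsymm : ∀ v w, adj v w → adj w v) :
    ∃ S : Finset V, ∀ v : V,
      (Odd (S.filter (fun u => adj v u)).card ↔ adj v v) := by
  classical
  set M : Matrix V V (ZMod 2) := fun v w => if adj v w then 1 else 0 with hMdef
  have hMsymm : ∀ v w, M v w = M w v := by
    intro v w
    simp only [hMdef]
    by_cases h : adj v w
    · simp [h, hsymm v w h]
    · have h2 : ¬ adj w v := fun h' => h (hsymm w v h')
      simp [h, h2]
  obtain ⟨x, hx⟩ := diag_mem_range M hMsymm
  refine ⟨Finset.univ.filter (fun u => x u = 1), fun v => ?_⟩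
  have hv := congrFun hx v
  have hcast : ∀ a : ZMod 2, a = if a = 1 then 1 else 0 := by decide
  have hsum : M.mulVec x v
      = (((Finset.univ.filter (fun u => x u = 1)).filter (fun u => adj v u)).card : ZMod 2) := by
    rw [Matrix.mulVec, dotProduct]
    have h1 : ∀ u, M v u * x u = if adj v u then x u else 0 := by
      intro u
      simp only [hMdef]
      by_cases h : adj v u <;> simp [h]
    simp only [h1]
    rw [← Finset.sum_filter]
    have h2 : ∀ u, x u = if x u = 1 then (1 : ZMod 2) else 0 := fun u => hcast (x u)
    rw [Finset.sum_congr rfl fun u _ => h2 u]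
    rw [Finset.sum_boole, Finset.filter_filter, Finset.filter_filter]
    congr 1
    · congr 1
      ext u
      simp [and_comm]
  have hodd : ∀ n : ℕ, Odd n ↔ (n : ZMod 2) = 1 := by
    intro n
    rw [Nat.odd_iff, ← ZMod.natCast_mod]
    rcases Nat.mod_two_eq_zero_or_one n with h | h <;> simp [h]
  rw [hodd, ← hsum, hv]
  simp only [hMdef]
  by_cases h : adj v v <;> simp [h]
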